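/- Let n ≥ 2 and let S be a subset of {(i,j) : 1 ≤ i < j ≤ n} with |S| < ⌊n/2⌋. Set A(S) := {w ∈ S_n : w(i) < w(j) for all (i,j) ∈ S}. Then Σ_{w∈A(S)} sgn(w) = 0. -/
import Mathlib

/-- If `S` is a set of pairs `(i,j)`, `i < j`, in `{1,…,n}` with
`|S| < ⌊n/2⌋`, then `a(S) = Σ_{w ∈ A(S)} sgn(w) = 0`, where
`A(S) = {w ∈ S_n : w(i) < w(j) for all (i,j) ∈ S}`. -/
theorem signed_count_small_S (n : ℕ) (hn : 2 ≤ n)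
    (S : Finset (Fin n × Fin n)) (hS : ∀ p ∈ S, p.1 < p.2)
    (hcard : S.card < n / 2) :
    (∑ w ∈ Finset.univ.filter
        (fun w : Equiv.Perm (Fin n) => ∀ p ∈ S, w p.1 < w p.2),
      (Equiv.Perm.sign w : ℤ)) = 0 := by
  classical
  set V : Finset (Fin n) := S.image Prod.fst ∪ S.image Prod.snd with hV
  have hVcard : V.card ≤ 2 * S.card := by
    calc V.card ≤ (S.image Prod.fst).card + (S.image Prod.snd).card :=
          Finset.card_union_le _ _
      _ ≤ S.card + S.card := by
          gcongr <;> exact Finset.card_image_le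
      _ = 2 * S.card := by ring
  have hVn : V.card + 2 ≤ n := by
    have h1 : 2 * S.card + 2 ≤ 2 * (n / 2) := by omega
    have h2 : 2 * (n / 2) ≤ n := Nat.mul_div_le n 2 |>.trans_eq rfl
    omega
  have hcc : 1 < Vᶜ.card := by
    have := Finset.card_compl V
    simp only [Fintype.card_fin] at this
    omega
  obtain ⟨a, ha, b, hb, hab⟩ := Finset.one_lt_card.mp hcc
  have hmem : ∀ c, c ∈ Vᶜ → ∀ p ∈ S, p.1 ≠ c ∧ p.2 ≠ c := by
    intro c hc p hp
    constructor <;> intro h <;> apply Finset.mem_compl.mp hc <;> rw [hV]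
    · exact Finset.mem_union_left _ (Finset.mem_image.mpr ⟨p, hp, h⟩)
    · exact Finset.mem_union_right _ (Finset.mem_image.mpr ⟨p, hp, h⟩)
  have hmema := hmem a ha
  have hmemb := hmem b hb
  have key : ∀ (w : Equiv.Perm (Fin n)) (p : Fin n × Fin n), p ∈ S →
      (w * Equiv.swap a b) p.1 = w p.1 ∧ (w * Equiv.swap a b) p.2 = w p.2 := by
    intro w p hp
    have h1 := hmema p hp
    have h2 := hmemb p hp
    constructor <;> simp [Equiv.Perm.mul_apply, Equiv.swap_apply_of_ne_of_ne,
      h1.1, h1.2, h2.1, h2.2]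
  apply Finset.sum_involution (fun w _ => w * Equiv.swap a b)
  · intro w hw
    have : Equiv.Perm.sign (w * Equiv.swap a b) = - Equiv.Perm.sign w := by
      simp [Equiv.Perm.sign_swap hab]
    rw [this]
    push_cast
    ring
  · intro w hw h
    intro heq
    have : Equiv.swap a b = 1 := by
      have := mul_left_cancel (a := w) (b := Equiv.swap a b) (c := 1) (by simpa using heq)
      simpa using this
    exact hab (by rwa [Equiv.swap_eq_one_iff] at this)
  · intro w hw
    simp only [Finset.mem_filter, Finset.mem_univ, true_and] at hw ⊢
    intro p hp
    rw [(key w p hp).1, (key w p hp).2]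
    exact hw p hp
  · intro w hw
    simp [mul_assoc]
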